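/- For all t ≥ 0 and a, b ≥ 0, the greedy visit probabilities satisfy the monotonicity q_t(1^a) ≥ q_t(1 0^{a+1}) and q_t(1^{a+1} 0^{b+1}) ≥ q_t(1^{a+2} 0^b), where q_t(w) is the probability that the greedy buffer at time t equals w for a uniformly random input of length t. -/

import Mathlib

/-- One step of the greedy algorithm: shorten the buffer whenever possible. -/
def greedyStep (w : List Bool) (b : Bool) : List Bool :=
  if w.head? = some b then w.tail else w ++ [b]

/-- The greedy algorithm buffer `greedy(s)`. -/
def greedy (s : List Bool) : List Bool := s.foldl greedyStep []
/-- `q t w`: probability that the greedy buffer at time `t` equals `w`,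
for a uniformly random binary word of length `t`. -/
noncomputable def q (t : ℕ) (w : List Bool) : ℝ :=
  ({f : Fin t → Bool | greedy (List.ofFn f) = w}.ncard : ℝ) / 2 ^ t

open Finset

def M (t : ℕ) (w : List Bool) : ℕ :=
  (Finset.univ.filter fun f : Fin t → Bool => greedy (List.ofFn f) = w).card

lemma q_eq (t : ℕ) (w : List Bool) : q t w = (M t w : ℝ) / 2 ^ t := by
  have hs : {f : Fin t → Bool | greedy (List.ofFn f) = w}
      = ↑(Finset.univ.filter fun f : Fin t → Bool => greedy (List.ofFn f) = w) := by
    ext f; simp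
  unfold q M
  rw [hs, Set.ncard_coe_finset]

lemma q_mono {t : ℕ} {w v : List Bool} (h : M t w ≤ M t v) : q t w ≤ q t v := by
  rw [q_eq, q_eq]
  have h' : (M t w : ℝ) ≤ (M t v : ℝ) := by exact_mod_cast h
  exact div_le_div_of_nonneg_right h' (by positivity)
lemma greedyStep_map_not (w : List Bool) (b : Bool) :
    greedyStep (w.map Bool.not) (!b) = (greedyStep w b).map Bool.not := by
  unfold greedyStep
  cases w with
  | nil => simp
  | cons a w => by_cases h : a = b <;> simp [h]

lemma foldl_greedy_map_not (s : List Bool) :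
    ∀ w, List.foldl greedyStep (w.map Bool.not) (s.map Bool.not)
      = (List.foldl greedyStep w s).map Bool.not := by
  induction s with
  | nil => intro w; simp
  | cons a s ih =>
    intro w
    simp only [List.map_cons, List.foldl_cons]
    rw [greedyStep_map_not w a, ih]

lemma greedy_map_not (s : List Bool) :
    greedy (s.map Bool.not) = (greedy s).map Bool.not := by
  have := foldl_greedy_map_not s []
  simpa [greedy] using this

lemma ofFn_not (t : ℕ) (f : Fin t → Bool) :
    List.ofFn (fun i => !(f i)) = (List.ofFn f).map Bool.not := by
  rw [List.map_ofFn]; rfl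

lemma M_map_not (t : ℕ) (w : List Bool) : M t w = M t (w.map Bool.not) := by
  unfold M
  apply Finset.card_nbij' (fun f => fun i => !(f i)) (fun f => fun i => !(f i))
  · intro f hf
    simp only [mem_coe, mem_filter, mem_univ, true_and] at hf ⊢
    rw [ofFn_not, greedy_map_not, hf]
  · intro f hf
    simp only [mem_coe, mem_filter, mem_univ, true_and] at hf ⊢
    rw [ofFn_not, greedy_map_not]
    rw [hf]
    simp [List.map_map, Function.comp_def, Bool.not_not]
  · intro f _; funext i; simp
  · intro f _; funext i; simp

lemma greedy_ofFn_succ (t : ℕ) (f : Fin (t + 1) → Bool) :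
    greedy (List.ofFn f)
      = greedyStep (greedy (List.ofFn fun i : Fin t => f i.castSucc)) (f (Fin.last t)) := by
  rw [List.ofFn_succ']
  simp only [List.concat_eq_append, greedy, List.foldl_concat]

def fib (t : ℕ) (b : Bool) (w : List Bool) : ℕ :=
  (Finset.univ.filter fun g : Fin t → Bool => greedyStep (greedy (List.ofFn g)) b = w).card

lemma M_succ_half (t : ℕ) (w : List Bool) (b : Bool) :
    ((Finset.univ.filter fun f : Fin (t+1) → Bool =>
        greedy (List.ofFn f) = w ∧ f (Fin.last t) = b)).card = fib t b w := by
  unfold fib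
  apply Finset.card_nbij' (fun f => fun i : Fin t => f i.castSucc) (fun g => Fin.snoc g b)
  · intro f hf
    simp only [mem_coe, mem_filter, mem_univ, true_and] at hf ⊢
    rw [← hf.2, ← greedy_ofFn_succ]
    exact hf.1
  · intro g hg
    simp only [mem_coe, mem_filter, mem_univ, true_and] at hg ⊢
    constructor
    · rw [greedy_ofFn_succ]
      simpa [Fin.snoc_castSucc, Fin.snoc_last] using hg
    · simp [Fin.snoc_last]
  · intro f hf
    simp only [mem_coe, mem_filter, mem_univ, true_and] at hf
    rw [← hf.2]
    exact Fin.snoc_init_self f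
  · intro g _
    funext i
    exact Fin.snoc_castSucc _ _ i

lemma M_succ (t : ℕ) (w : List Bool) :
    M (t + 1) w = fib t true w + fib t false w := by
  unfold M
  rw [← M_succ_half t w true, ← M_succ_half t w false]
  rw [← Finset.card_filter_add_card_filter_not
    (s := Finset.univ.filter fun f : Fin (t+1) → Bool => greedy (List.ofFn f) = w)
    (p := fun f => f (Fin.last t) = true)]
  congr 1
  · rw [Finset.filter_filter]
  · rw [Finset.filter_filter]
    congr 1
    ext f
    simp
lemma greedyStep_eq_iff (v w : List Bool) (b : Bool) :
    greedyStep v b = w ↔ (v = b :: w ∨ (w = v ++ [b] ∧ v.head? ≠ some b)) := by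
  unfold greedyStep
  split
  next h =>
    cases v with
    | nil => simp at h
    | cons a v =>
      simp only [List.head?_cons, Option.some.injEq] at h
      subst h
      simp only [List.tail_cons]
      constructor
      · rintro rfl; left; rfl
      · rintro (h | ⟨rfl, h⟩)
        · exact (List.cons.injEq .. ▸ h).2.symm ▸ rfl
        · simp at h
  next h =>
    constructor
    · rintro rfl
      exact Or.inr ⟨rfl, h⟩
    · rintro (rfl | ⟨rfl, _⟩)
      · simp at h
      · rfl

def R (i j : ℕ) : List Bool := List.replicate i true ++ List.replicate j false

lemma R_head? (i j : ℕ) : (R (i+1) j).head? = some true := by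
  simp [R, List.replicate_succ]

lemma true_cons_R (i j : ℕ) : true :: R i j = R (i+1) j := by
  simp [R, List.replicate_succ]

lemma R_concat_false (i j : ℕ) : R i (j+1) = R i j ++ [false] := by
  simp [R, List.replicate_succ' (n := j), List.append_assoc]

lemma R_concat_true (i : ℕ) : R (i+1) 0 = R i 0 ++ [true] := by
  simp [R, List.replicate_succ' (n := i)]

lemma ne_concat_of_getLast {w v : List Bool} {b c : Bool} (hw : w = v ++ [b]) (hbc : b ≠ c)
    (u : List Bool) : w ≠ u ++ [c] := by
  rintro rfl
  have h1 : (v ++ [b]).getLast? = some b := List.getLast?_concat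
  have h2 : (u ++ [c]).getLast? = some c := List.getLast?_concat
  rw [← hw] at h1
  rw [h1] at h2
  exact hbc (by simpa using h2)

lemma concat_cancel {w v : List Bool} {b : Bool} (h : w ++ [b] = v ++ [b]) : w = v :=
  List.append_inj_left' h rfl
lemma fib_single (t : ℕ) (b : Bool) (w v₁ : List Bool)
    (h : ∀ v, greedyStep v b = w ↔ v = v₁) :
    fib t b w = M t v₁ := by
  unfold fib M
  congr 1
  ext f
  simp [h]

lemma fib_pair (t : ℕ) (b : Bool) (w v₁ v₂ : List Bool) (hne : v₁ ≠ v₂)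
    (h : ∀ v, greedyStep v b = w ↔ (v = v₁ ∨ v = v₂)) :
    fib t b w = M t v₁ + M t v₂ := by
  unfold fib M
  rw [show (Finset.univ.filter fun g : Fin t → Bool => greedyStep (greedy (List.ofFn g)) b = w)
      = (Finset.univ.filter fun g : Fin t → Bool => greedy (List.ofFn g) = v₁)
        ∪ (Finset.univ.filter fun g : Fin t → Bool => greedy (List.ofFn g) = v₂) by
    ext f; simp [h, Finset.mem_union]]
  apply Finset.card_union_of_disjoint
  rw [Finset.disjoint_filter]
  intro f _ h1 h2
  exact hne (h1 ▸ h2 ▸ rfl)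

lemma length_ne_concat (w v : List Bool) (b : Bool) (h : w.length ≠ v.length + 1) :
    w ≠ v ++ [b] := fun hh => h (by simp [hh])

/-- Recurrence for `1^{i+1} 0^{j+1}`. -/
lemma rec1 (t i j : ℕ) :
    M (t+1) (R (i+1) (j+1))
      = M t (R (i+2) (j+1)) + (M t (false :: R (i+1) (j+1)) + M t (R (i+1) j)) := by
  rw [M_succ]
  congr 1
  · apply fib_single
    intro v
    rw [greedyStep_eq_iff]
    constructor
    · rintro (rfl | ⟨hw, _⟩)
      · rw [true_cons_R]
      · exact absurd hw (ne_concat_of_getLast (R_concat_false (i+1) j) (by simp) v)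
    · rintro rfl
      left
      rw [true_cons_R]
  · apply fib_pair t false _ _ _ ?ne
    case ne =>
      intro hh
      have := congrArg List.length hh
      simp [R] at this
      omega
    intro v
    rw [greedyStep_eq_iff]
    constructor
    · rintro (rfl | ⟨hw, hv⟩)
      · left; rfl
      · right
        rw [R_concat_false] at hw
        exact (concat_cancel hw).symm
    · rintro (rfl | rfl)
      · left; rfl
      · right
        refine ⟨R_concat_false (i+1) j, ?_⟩
        rw [R_head?]
        simp

/-- Recurrence for `1^{i+2}`. -/
lemma rec2 (t i : ℕ) :
    M (t+1) (R (i+2) 0) = M t (R (i+3) 0) + M t (false :: R (i+2) 0) := by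
  rw [M_succ]
  congr 1
  · apply fib_single
    intro v
    rw [greedyStep_eq_iff]
    constructor
    · rintro (rfl | ⟨hw, hv⟩)
      · rw [true_cons_R]
      · exfalso
        rw [R_concat_true (i+1)] at hw
        rw [concat_cancel hw.symm] at hv  -- hv : head? v ≠ some true, v = R (i+1+... )
        exact hv (R_head? i 0)
    · rintro rfl
      left
      rw [true_cons_R]
  · apply fib_single
    intro v
    rw [greedyStep_eq_iff]
    constructor
    · rintro (rfl | ⟨hw, _⟩)
      · rfl
      · exact absurd hw (ne_concat_of_getLast (R_concat_true (i+1)) (by simp) v)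
    · rintro rfl
      left; rfl

lemma R_one : R 1 0 = [] ++ [true] := by simp [R]

/-- Recurrence for `[true]`. -/
lemma rec3 (t : ℕ) :
    M (t+1) (R 1 0) = (M t (R 2 0) + M t (R 0 0)) + M t (false :: R 1 0) := by
  rw [M_succ]
  congr 1
  · apply fib_pair t true _ _ _ (by simp [R])
    intro v
    rw [greedyStep_eq_iff]
    constructor
    · rintro (rfl | ⟨hw, hv⟩)
      · left; rw [true_cons_R]
      · right
        rw [R_one] at hw
        have := concat_cancel hw
        simp [R, ← this]
    · rintro (rfl | rfl)
      · left; rw [true_cons_R]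
      · right
        exact ⟨by simp [R], by simp [R]⟩
  · apply fib_single
    intro v
    rw [greedyStep_eq_iff]
    constructor
    · rintro (rfl | ⟨hw, _⟩)
      · rfl
      · exact absurd hw (ne_concat_of_getLast R_one (by simp) v)
    · rintro rfl
      left; rfl

/-- Recurrence for the empty word. -/
lemma rec0 (t : ℕ) :
    M (t+1) (R 0 0) = M t (R 1 0) + M t (R 0 1) := by
  rw [M_succ]
  congr 1
  · apply fib_single
    intro v
    rw [greedyStep_eq_iff]
    constructor
    · rintro (rfl | ⟨hw, _⟩)
      · simp [R]
      · exact absurd hw (length_ne_concat _ _ _ (by simp [R]))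
    · rintro rfl
      left; simp [R]
  · apply fib_single
    intro v
    rw [greedyStep_eq_iff]
    constructor
    · rintro (rfl | ⟨hw, _⟩)
      · simp [R]
      · exact absurd hw (length_ne_concat _ _ _ (by simp [R]))
    · rintro rfl
      left; simp [R]
/-- Two-block invariant of greedy buffers. -/
def TwoBlock (w : List Bool) : Prop :=
  ∃ c i j, w = List.replicate i c ++ List.replicate j (!c)

lemma twoBlock_nil : TwoBlock [] := ⟨true, 0, 0, rfl⟩

lemma twoBlock_step {w : List Bool} (h : TwoBlock w) (b : Bool) :
    TwoBlock (greedyStep w b) := by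
  obtain ⟨c, i, j, rfl⟩ := h
  unfold greedyStep
  split
  next hh =>
    cases i with
    | zero =>
      cases j with
      | zero => simp at hh
      | succ j =>
        refine ⟨!c, j, 0, ?_⟩
        simp [List.replicate_succ]
    | succ i =>
      refine ⟨c, i, j, ?_⟩
      simp [List.replicate_succ]
  next hh =>
    cases i with
    | zero =>
      cases j with
      | zero =>
        exact ⟨b, 1, 0, by simp [List.replicate_succ]⟩
      | succ j =>
        have hb : b = c := by
          simp [List.replicate_succ] at hh
          cases b <;> cases c <;> simp_all
        subst hb
        refine ⟨!b, j+1, 1, ?_⟩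
        simp [List.replicate_succ' (n := j+1), List.replicate_succ]
    | succ i =>
      have hb : b = !c := by
        simp [List.replicate_succ] at hh
        cases b <;> cases c <;> simp_all
      subst hb
      refine ⟨c, i+1, j+1, ?_⟩
      rw [List.replicate_succ' (n := j)]
      simp

lemma twoBlock_greedy (s : List Bool) : TwoBlock (greedy s) := by
  suffices h : ∀ w, TwoBlock w → TwoBlock (List.foldl greedyStep w s) from
    h [] twoBlock_nil
  induction s with
  | nil => intro w hw; exact hw
  | cons a s ih =>
    intro w hw
    exact ih _ (twoBlock_step hw a)

lemma M_eq_zero_of_not_twoBlock (t : ℕ) {w : List Bool} (h : ¬ TwoBlock w) :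
    M t w = 0 := by
  unfold M
  rw [Finset.card_eq_zero, Finset.filter_eq_empty_iff]
  intro f _ hf
  exact h (hf ▸ twoBlock_greedy (List.ofFn f))

lemma not_twoBlock {w : List Bool} (h1 : true ∈ w) (h2 : false ∈ w)
    (h3 : w.head? = some false) (h4 : w.getLast? = some false) : ¬ TwoBlock w := by
  rintro ⟨c, i, j, rfl⟩
  cases i with
  | zero =>
    simp only [List.replicate_zero, List.nil_append] at h1 h2
    have e1 := List.eq_of_mem_replicate h1
    have e2 := List.eq_of_mem_replicate h2
    exact absurd (e1.trans e2.symm) (by simp)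
  | succ i =>
    cases j with
    | zero =>
      simp only [List.replicate_zero, List.append_nil] at h1 h2
      have e1 := List.eq_of_mem_replicate h1
      have e2 := List.eq_of_mem_replicate h2
      exact absurd (e1.trans e2.symm) (by simp)
    | succ j =>
      have hc : c = false := by
        rw [List.replicate_succ] at h3
        simpa using h3.symm
      have hlast : (List.replicate (i+1) c ++ List.replicate (j+1) (!c)).getLast? = some (!c) := by
        rw [List.replicate_succ' (n := j), ← List.append_assoc]
        exact List.getLast?_concat
      rw [h4] at hlast
      rw [hc] at hlast
      simp at hlast

lemma junk_zero (t i j : ℕ) : M t (false :: R (i+1) (j+1)) = 0 := by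
  apply M_eq_zero_of_not_twoBlock
  apply not_twoBlock
  · simp [R, List.replicate_succ]
  · simp [R, List.replicate_succ]
  · simp
  · rw [show false :: R (i+1) (j+1) = (false :: R (i+1) j) ++ [false] by
      rw [R_concat_false]; simp]
    exact List.getLast?_concat

lemma false_cons_R_zero (t i : ℕ) : M t (false :: R (i+1) 0) = M t (R 1 (i+1)) := by
  have e : (false :: R (i+1) 0).map Bool.not = R 1 (i+1) := by
    simp [R, List.replicate_succ, List.map_replicate]
  rw [M_map_not, e]

lemma M_zero_ne (w : List Bool) (h : w ≠ []) : M 0 w = 0 := by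
  unfold M
  rw [Finset.card_eq_zero, Finset.filter_eq_empty_iff]
  intro f _ hf
  apply h
  rw [← hf]
  have : List.ofFn f = [] := by simp
  rw [this]
  rfl

lemma M_R01 (t : ℕ) : M t (R 0 1) = M t (R 1 0) := by
  rw [M_map_not t (R 1 0)]
  congr 1

/-- The main induction: both monotonicity statements for counts. -/
lemma M_mono (t : ℕ) :
    (∀ a, M t (R 1 (a+1)) ≤ M t (R a 0)) ∧
    (∀ a b, M t (R (a+2) b) ≤ M t (R (a+1) (b+1))) := by
  induction t with
  | zero =>
    constructor
    · intro a
      rw [M_zero_ne (R 1 (a+1)) (by simp [R])]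
      exact Nat.zero_le _
    · intro a b
      rw [M_zero_ne (R (a+2) b) (by simp [R, List.replicate_succ])]
      exact Nat.zero_le _
  | succ t ih =>
    obtain ⟨ihA, ihB⟩ := ih
    have key : ∀ a, M t (R 2 (a+1)) ≤ M t (R (a+1) 0) := fun a =>
      le_trans (ihB 0 (a+1)) (ihA (a+1))
    constructor
    · intro a
      match a with
      | 0 =>
        have r1 : M (t+1) (R 1 1) = M t (R 2 1) + (M t (false :: R 1 1) + M t (R 1 0)) :=
          rec1 t 0 0
        have r0 : M (t+1) (R 0 0) = M t (R 1 0) + M t (R 0 1) := rec0 t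
        have j1 : M t (false :: R 1 1) = 0 := junk_zero t 0 0
        have hk : M t (R 2 1) ≤ M t (R 1 0) := key 0
        have hs := M_R01 t
        show M (t+1) (R 1 1) ≤ M (t+1) (R 0 0)
        omega
      | 1 =>
        have r1 : M (t+1) (R 1 2) = M t (R 2 2) + (M t (false :: R 1 2) + M t (R 1 1)) :=
          rec1 t 0 1
        have r3 : M (t+1) (R 1 0) = (M t (R 2 0) + M t (R 0 0)) + M t (false :: R 1 0) :=
          rec3 t
        have j1 : M t (false :: R 1 2) = 0 := junk_zero t 0 1
        have hf : M t (false :: R 1 0) = M t (R 1 1) := false_cons_R_zero t 0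
        have h1 : M t (R 2 2) ≤ M t (R 2 0) := le_trans (ihB 0 2) (ihA 2)
        show M (t+1) (R 1 2) ≤ M (t+1) (R 1 0)
        omega
      | (a+2) =>
        have r1 : M (t+1) (R 1 (a+3)) = M t (R 2 (a+3)) + (M t (false :: R 1 (a+3)) + M t (R 1 (a+2))) :=
          rec1 t 0 (a+2)
        have r2 : M (t+1) (R (a+2) 0) = M t (R (a+3) 0) + M t (false :: R (a+2) 0) :=
          rec2 t a
        have j1 : M t (false :: R 1 (a+3)) = 0 := junk_zero t 0 (a+2)
        have hf : M t (false :: R (a+2) 0) = M t (R 1 (a+2)) := false_cons_R_zero t (a+1)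
        have h1 : M t (R 2 (a+3)) ≤ M t (R (a+3) 0) := key (a+2)
        show M (t+1) (R 1 (a+3)) ≤ M (t+1) (R (a+2) 0)
        omega
    · intro a b
      match b with
      | 0 =>
        have r2 : M (t+1) (R (a+2) 0) = M t (R (a+3) 0) + M t (false :: R (a+2) 0) :=
          rec2 t a
        have r1 : M (t+1) (R (a+1) 1) = M t (R (a+2) 1) + (M t (false :: R (a+1) 1) + M t (R (a+1) 0)) :=
          rec1 t a 0
        have j1 : M t (false :: R (a+1) 1) = 0 := junk_zero t a 0
        have hf : M t (false :: R (a+2) 0) = M t (R 1 (a+2)) := false_cons_R_zero t (a+1)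
        have h1 : M t (R (a+3) 0) ≤ M t (R (a+2) 1) := ihB (a+1) 0
        have h2 : M t (R 1 (a+2)) ≤ M t (R (a+1) 0) := ihA (a+1)
        show M (t+1) (R (a+2) 0) ≤ M (t+1) (R (a+1) 1)
        omega
      | (b+1) =>
        have ra : M (t+1) (R (a+2) (b+1)) = M t (R (a+3) (b+1)) + (M t (false :: R (a+2) (b+1)) + M t (R (a+2) b)) :=
          rec1 t (a+1) b
        have rb : M (t+1) (R (a+1) (b+2)) = M t (R (a+2) (b+2)) + (M t (false :: R (a+1) (b+2)) + M t (R (a+1) (b+1))) :=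
          rec1 t a (b+1)
        have j1 : M t (false :: R (a+2) (b+1)) = 0 := junk_zero t (a+1) b
        have j2 : M t (false :: R (a+1) (b+2)) = 0 := junk_zero t a (b+1)
        have h1 : M t (R (a+3) (b+1)) ≤ M t (R (a+2) (b+2)) := ihB (a+1) (b+1)
        have h2 : M t (R (a+2) b) ≤ M t (R (a+1) (b+1)) := ihB a b
        show M (t+1) (R (a+2) (b+1)) ≤ M (t+1) (R (a+1) (b+2))
        omega

/-- for all `t, a, b ≥ 0`, `q_t(1^a) ≥ q_t(1 0^{a+1})` and
`q_t(1^{a+1} 0^{b+1}) ≥ q_t(1^{a+2} 0^b)`. -/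
theorem greedy_q_monotonicity (t a b : ℕ) :
    q t (true :: List.replicate (a + 1) false) ≤ q t (List.replicate a true) ∧
    q t (List.replicate (a + 2) true ++ List.replicate b false)
      ≤ q t (List.replicate (a + 1) true ++ List.replicate (b + 1) false) := by
  obtain ⟨hA, hB⟩ := M_mono t
  constructor
  · have e1 : true :: List.replicate (a + 1) false = R 1 (a+1) := by
      simp [R, List.replicate_succ]
    have e2 : List.replicate a true = R a 0 := by simp [R]
    rw [e1, e2]
    exact q_mono (hA a)
  · exact q_mono (hB a b)
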